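/- For all positive integers t and m there exists n such that every set S of n tuples of length t (over any set) contains a subset A of m tuples and an index set I ⊆ [t] such that, letting J = [t] \ I, for all distinct tuples a, a' in A, the restrictions a|_I and a'|_I are equal (coordinatewise), and the restrictions a|_J and a'|_J are disjoint (share no element). -/

import Mathlib

/-- Sunflower lemma for tuples: for all positive `t`, `m` there is `n` such that
every set of at least `n` tuples of length `t` contains `m` tuples that agree on
the coordinates of some index set `I` and whose restrictions outside `I` are
pairwise disjoint (share no element). -/
theorem tuple_sunflower (t m : ℕ) (ht : 1 ≤ t) (hm : 1 ≤ m) :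
    ∃ n : ℕ, ∀ (α : Type) (S : Finset (Fin t → α)), n ≤ S.card →
      ∃ A ⊆ S, A.card = m ∧ ∃ I : Finset (Fin t),
        ∀ a ∈ A, ∀ a' ∈ A, a ≠ a' →
          (∀ i ∈ I, a i = a' i) ∧
          (∀ i ∉ I, ∀ j ∉ I, a i ≠ a' j) := by
  classical
  rcases eq_or_lt_of_le hm with hm1 | hm2
  · -- m = 1 : trivial
    refine ⟨1, fun α S hS => ?_⟩
    obtain ⟨a, ha⟩ := Finset.card_pos.mp hS
    refine ⟨{a}, by simpa using ha, by simp [← hm1], ∅, ?_⟩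
    intro x hx y hy hxy
    simp only [Finset.mem_singleton] at hx hy
    exact absurd (hx.trans hy.symm) hxy
  · -- m ≥ 2
    have key : ∀ k : ℕ, ∃ n : ℕ, 1 ≤ n ∧ ∀ (K : Finset (Fin t)), K.card ≤ k →
        ∀ (α : Type) (S : Finset (Fin t → α)),
        (∀ a ∈ S, ∀ b ∈ S, ∀ i, i ∉ K → a i = b i) → n ≤ S.card →
        ∃ A ⊆ S, A.card = m ∧ ∃ I : Finset (Fin t),
          ∀ a ∈ A, ∀ a' ∈ A, a ≠ a' →
            (∀ i ∈ I, a i = a' i) ∧ (∀ i ∉ I, ∀ j ∉ I, a i ≠ a' j) := by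
      intro k
      induction k with
      | zero =>
        refine ⟨2, by norm_num, fun K hK α S hagree hS => ?_⟩
        exfalso
        have hK0 : K = ∅ := Finset.card_eq_zero.mp (Nat.le_zero.mp hK)
        have : S.card ≤ 1 := Finset.card_le_one.mpr (fun a ha b hb => funext fun i =>
          hagree a ha b hb i (by simp [hK0]))
        omega
      | succ k ih =>
        obtain ⟨n', hn'1, hn'⟩ := ih
        have hcpos : 0 < t * (t * (m - 1)) :=
          Nat.mul_pos ht (Nat.mul_pos ht (by omega))
        refine ⟨t * (t * (m - 1)) * n' + 1, by omega, fun K hK α S hagree hS => ?_⟩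
        by_cases hKk : K.card ≤ k
        · refine hn' K hKk α S hagree (le_trans ?_ hS)
          have : n' ≤ t * (t * (m - 1)) * n' := Nat.le_mul_of_pos_left n' hcpos
          omega
        -- K.card = k + 1, in particular K is nonempty
        have hKne : K.Nonempty := Finset.card_pos.mp (by omega)
        obtain ⟨i₁, hi₁⟩ := hKne
        -- pick a pairwise "K-disjoint" subfamily D of maximum cardinality
        set C : Finset (Finset (Fin t → α)) :=
          S.powerset.filter
            (fun D => ∀ x ∈ D, ∀ y ∈ D, x ≠ y → ∀ i ∈ K, ∀ j ∈ K, x i ≠ y j) with hC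
        have hCne : C.Nonempty := ⟨∅, by simp [hC]⟩
        obtain ⟨D, hDC, hDmax⟩ := Finset.exists_max_image C Finset.card hCne
        rw [hC, Finset.mem_filter, Finset.mem_powerset] at hDC
        obtain ⟨hDS, hDdisj⟩ := hDC
        by_cases hDm : m ≤ D.card
        · -- found m pairwise disjoint tuples
          obtain ⟨A, hAD, hAcard⟩ := Finset.exists_subset_card_eq hDm
          refine ⟨A, hAD.trans hDS, hAcard, Kᶜ, fun a ha a' ha' hne => ?_⟩
          constructor
          · intro i hi
            exact hagree a (hDS (hAD ha)) a' (hDS (hAD ha')) i (Finset.mem_compl.mp hi)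
          · intro i hi j hj
            rw [Finset.mem_compl, not_not] at hi hj
            exact hDdisj a (hAD ha) a' (hAD ha') hne i hi j hj
        -- otherwise D.card ≤ m - 1; every tuple in S hits the value set E of D on K
        push_neg at hDm
        set E : Finset α := D.biUnion (fun d => K.image d) with hE
        have hEcard : E.card ≤ (m - 1) * t := by
          calc E.card ≤ ∑ d ∈ D, (K.image d).card := Finset.card_biUnion_le
            _ ≤ ∑ _d ∈ D, K.card := Finset.sum_le_sum (fun d _ => Finset.card_image_le)
            _ = D.card * K.card := by rw [Finset.sum_const, smul_eq_mul]
            _ ≤ (m - 1) * t := Nat.mul_le_mul (by omega) (Finset.card_le_univ K |>.trans (by simp))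
        have hcov : ∀ a ∈ S, ∃ i, i ∈ K ∧ a i ∈ E := by
          intro a ha
          by_cases haD : a ∈ D
          · exact ⟨i₁, hi₁, Finset.mem_biUnion.mpr ⟨a, haD, Finset.mem_image_of_mem a hi₁⟩⟩
          · -- insert a D would be a larger pairwise disjoint family
            have hnotdisj : ¬ (∀ x ∈ insert a D, ∀ y ∈ insert a D, x ≠ y →
                ∀ i ∈ K, ∀ j ∈ K, x i ≠ y j) := by
              intro hins
              have hmem : insert a D ∈ C := by
                rw [hC, Finset.mem_filter, Finset.mem_powerset]
                exact ⟨Finset.insert_subset ha hDS, hins⟩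
              have := hDmax _ hmem
              rw [Finset.card_insert_of_notMem haD] at this
              omega
            push_neg at hnotdisj
            obtain ⟨x, hx, y, hy, hxy, i, hi, j, hj, hij⟩ := hnotdisj
            rw [Finset.mem_insert] at hx hy
            rcases hx with rfl | hxD
            · rcases hy with rfl | hyD
              · exact absurd rfl hxy
              · exact ⟨i, hi, hij ▸ Finset.mem_biUnion.mpr
                  ⟨y, hyD, Finset.mem_image_of_mem y hj⟩⟩
            · rcases hy with rfl | hyD
              · exact ⟨j, hj, hij ▸ Finset.mem_biUnion.mpr
                  ⟨x, hxD, Finset.mem_image_of_mem x hi⟩⟩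
              · exact absurd hij (hDdisj x hxD y hyD hxy i hi j hj)
        -- pigeonhole: some coordinate-value pair (i₀, v) occurs in many tuples
        set f : (Fin t → α) → Fin t × α :=
          fun a => if h : ∃ i, i ∈ K ∧ a i ∈ E then (h.choose, a h.choose) else (i₁, a i₁)
            with hf
        have hfspec : ∀ a ∈ S, (f a).1 ∈ K ∧ a (f a).1 = (f a).2 ∧ (f a).2 ∈ E := by
          intro a ha
          have h := hcov a ha
          have heq : f a = (h.choose, a h.choose) := dif_pos h
          rw [heq]
          exact ⟨h.choose_spec.1, rfl, h.choose_spec.2⟩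
        have hmaps : ∀ a ∈ S, f a ∈ K ×ˢ E := by
          intro a ha
          obtain ⟨h1, h2, h3⟩ := hfspec a ha
          exact Finset.mem_product.mpr ⟨h1, h2 ▸ h3⟩
        have hSne : S.Nonempty := Finset.card_pos.mp (by omega)
        have hBne : (K ×ˢ E).Nonempty := ⟨f hSne.choose, hmaps _ hSne.choose_spec⟩
        have hcard : (K ×ˢ E).card * n' ≤ S.card := by
          have h1 : (K ×ˢ E).card ≤ t * ((m - 1) * t) := by
            rw [Finset.card_product]
            exact Nat.mul_le_mul (Finset.card_le_univ K |>.trans (by simp)) hEcard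
          have h2 : t * ((m - 1) * t) * n' = t * (t * (m - 1)) * n' := by ring
          have h3 : (K ×ˢ E).card * n' ≤ t * ((m - 1) * t) * n' :=
            Nat.mul_le_mul_right n' h1
          omega
        obtain ⟨p, hpB, hpcard⟩ :=
          Finset.exists_le_card_fiber_of_mul_le_card_of_maps_to hmaps hBne hcard
        set S' : Finset (Fin t → α) := S.filter (fun a => f a = p) with hS'
        have hS'S : S' ⊆ S := Finset.filter_subset _ _
        have hval : ∀ a ∈ S', a p.1 = p.2 := by
          intro a ha
          rw [hS', Finset.mem_filter] at ha
          obtain ⟨h1, h2, _⟩ := hfspec a ha.1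
          rw [← ha.2]
          exact h2
        have hp1K : p.1 ∈ K := (Finset.mem_product.mp hpB).1
        have hK'card : (K.erase p.1).card ≤ k := by
          rw [Finset.card_erase_of_mem hp1K]
          omega
        have hagree' : ∀ a ∈ S', ∀ b ∈ S', ∀ i, i ∉ K.erase p.1 → a i = b i := by
          intro a ha b hb i hi
          rw [Finset.mem_erase] at hi
          push_neg at hi
          by_cases hip : i = p.1
          · subst hip; rw [hval a ha, hval b hb]
          · exact hagree a (hS'S ha) b (hS'S hb) i (hi hip)
        obtain ⟨A, hAS', hres⟩ := hn' (K.erase p.1) hK'card α S' hagree' hpcard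
        exact ⟨A, hAS'.trans hS'S, hres⟩
    obtain ⟨n, hn1, hn⟩ := key t
    exact ⟨n, fun α S hS => hn Finset.univ (by simp) α S
      (fun a _ b _ i hi => absurd (Finset.mem_univ i) hi) hS⟩
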